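/- arXiv:2108.03023 — 5 statements merged into one kernel-verified Lean document; each statement's English description precedes it below -/
import Mathlib

section
/- Let p0, p1, f, g, r be real numbers with 0 < p1 < p0, f > 0, g > 0 and r ≥ 0. Then g * r^(p1) ≤ f * r^(p0) + ((p1/p0)^(p1/(p0 - p1)) - (p1/p0)^(p0/(p0 - p1))) * (g^(p0) / f^(p1))^(1/(p0 - p1)). -/
/-- Weighted Young-type inequality (2.2): for `0 < p1 < p0`, `f, g > 0`, `r ≥ 0`,
`g * r^(p1) ≤ f * r^(p0) + ((p1/p0)^(p1/(p0-p1)) - (p1/p0)^(p0/(p0-p1))) * (g^(p0)/f^(p1))^(1/(p0-p1))`. -/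
theorem stmt0 (p0 p1 f g r : ℝ) (hp1 : 0 < p1) (hp : p1 < p0)
    (hf : 0 < f) (hg : 0 < g) (hr : 0 ≤ r) :
    g * r ^ p1 ≤ f * r ^ p0 +
      ((p1 / p0) ^ (p1 / (p0 - p1)) - (p1 / p0) ^ (p0 / (p0 - p1))) *
        (g ^ p0 / f ^ p1) ^ (1 / (p0 - p1)) := by
  have hp0 : 0 < p0 := hp1.trans hp
  have hd : 0 < p0 - p1 := sub_pos.2 hp
  set θ : ℝ := p1 / p0 with hθdef
  have hθ0 : 0 < θ := div_pos hp1 hp0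
  have hθ1 : θ < 1 := (div_lt_one hp0).2 hp
  have hbase : 0 < θ * g / f := div_pos (mul_pos hθ0 hg) hf
  set K : ℝ := (θ * g / f) ^ (1 / (p0 - p1)) with hKdef
  have hK0 : 0 < K := Real.rpow_pos_of_pos hbase _
  have hKd : K ^ (p0 - p1) = θ * g / f := by
    rw [hKdef, ← Real.rpow_mul hbase.le, one_div, inv_mul_cancel₀ hd.ne', Real.rpow_one]
  have hrK : 0 ≤ r / K := div_nonneg hr hK0.le
  have hx : (0:ℝ) ≤ (r / K) ^ p0 := Real.rpow_nonneg hrK _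
  have gm := Real.geom_mean_le_arith_mean2_weighted hθ0.le
    (by linarith : (0:ℝ) ≤ 1 - θ) hx zero_le_one (by ring)
  rw [Real.one_rpow, mul_one, mul_one, ← Real.rpow_mul hrK] at gm
  have hp0θ : p0 * θ = p1 := by rw [hθdef]; field_simp
  rw [hp0θ] at gm
  have hKp1 : 0 < K ^ p1 := Real.rpow_pos_of_pos hK0 _
  have main : g * K ^ p1 * ((r / K) ^ p1) ≤ g * K ^ p1 * (θ * (r / K) ^ p0 + (1 - θ)) :=
    mul_le_mul_of_nonneg_left gm (mul_pos hg hKp1).le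
  have eq1 : g * K ^ p1 * ((r / K) ^ p1) = g * r ^ p1 := by
    rw [Real.div_rpow hr hK0.le]
    field_simp
  have hKp0 : K ^ p0 = K ^ p1 * (θ * g / f) := by
    rw [← hKd, ← Real.rpow_add hK0]; ring_nf
  have eq2 : g * K ^ p1 * (θ * (r / K) ^ p0) = f * r ^ p0 := by
    rw [Real.div_rpow hr hK0.le, hKp0]
    field_simp
  have hKp1' : K ^ p1 = (θ * g / f) ^ (p1 / (p0 - p1)) := by
    rw [hKdef, ← Real.rpow_mul hbase.le, one_div, inv_mul_eq_div]
  have eq3 : g * K ^ p1 * (1 - θ) =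
      (θ ^ (p1 / (p0 - p1)) - θ ^ (p0 / (p0 - p1))) *
        (g ^ p0 / f ^ p1) ^ (1 / (p0 - p1)) := by
    have h1 : (θ * g / f) ^ (p1 / (p0 - p1)) =
        θ ^ (p1 / (p0 - p1)) * g ^ (p1 / (p0 - p1)) / f ^ (p1 / (p0 - p1)) := by
      rw [Real.div_rpow (mul_pos hθ0 hg).le hf.le, Real.mul_rpow hθ0.le hg.le]
    have h2 : p0 / (p0 - p1) = p1 / (p0 - p1) + 1 := by field_simp; ring
    have h3 : θ ^ (p0 / (p0 - p1)) = θ ^ (p1 / (p0 - p1)) * θ := by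
      rw [h2, Real.rpow_add hθ0, Real.rpow_one]
    have h4 : (g ^ p0 / f ^ p1) ^ (1 / (p0 - p1)) =
        g ^ (p1 / (p0 - p1)) * g / f ^ (p1 / (p0 - p1)) := by
      rw [Real.div_rpow (Real.rpow_nonneg hg.le _) (Real.rpow_nonneg hf.le _),
        ← Real.rpow_mul hg.le, ← Real.rpow_mul hf.le]
      rw [show p0 * (1 / (p0 - p1)) = p1 / (p0 - p1) + 1 by field_simp; ring,
        show p1 * (1 / (p0 - p1)) = p1 / (p0 - p1) by field_simp,
        Real.rpow_add hg, Real.rpow_one]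
    rw [hKp1', h1, h3, h4]
    have hfp : (0:ℝ) < f ^ (p1 / (p0 - p1)) := Real.rpow_pos_of_pos hf _
    field_simp
  calc g * r ^ p1 = g * K ^ p1 * ((r / K) ^ p1) := eq1.symm
    _ ≤ g * K ^ p1 * (θ * (r / K) ^ p0 + (1 - θ)) := main
    _ = g * K ^ p1 * (θ * (r / K) ^ p0) + g * K ^ p1 * (1 - θ) := by ring
    _ = f * r ^ p0 + (θ ^ (p1 / (p0 - p1)) - θ ^ (p0 / (p0 - p1))) *
        (g ^ p0 / f ^ p1) ^ (1 / (p0 - p1)) := by rw [eq2, eq3]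
end

section
/- Let a, G > 0 and t1 < T be reals (T a real number), p : ℝ → ℝ continuous, and P : ℝ → ℝ with: P has derivative p(t) at every t ∈ ℝ. Suppose z : ℝ → ℝ satisfies z(t) > 0 for all t ∈ [t1, T), z has at every t ∈ [t1, T) a derivative z'(t) with z'(t) ≤ a * p(t) * z(t) - G * p(t), and z(t1) < G/a. Then for every t ∈ [t1, T), P(t) < P(t1) - (1/a) * log(1 - a * z(t1) / G). -/
/-- Finite-time blow-up bound of Section 3: if `z > 0` on `[t1, T)` satisfies
`z' ≤ a·p(t)·z - G·p(t)` and `z(t1) < G/a`, then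
`P(t) < P(t1) - (1/a)·log(1 - a·z(t1)/G)` for all `t ∈ [t1, T)`. -/
theorem stmt10 (a G t1 T : ℝ) (ha : 0 < a) (hG : 0 < G) (hT : t1 < T)
    (p P : ℝ → ℝ) (hp : Continuous p) (hP : ∀ t : ℝ, HasDerivAt P (p t) t)
    (z z' : ℝ → ℝ)
    (hpos : ∀ t ∈ Set.Ico t1 T, 0 < z t)
    (hz : ∀ t ∈ Set.Ico t1 T, HasDerivAt z (z' t) t)
    (hineq : ∀ t ∈ Set.Ico t1 T, z' t ≤ a * p t * z t - G * p t)
    (hinit : z t1 < G / a) :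
    ∀ t ∈ Set.Ico t1 T, P t < P t1 - (1 / a) * Real.log (1 - a * z t1 / G) := by
  intro t ht
  obtain ⟨ht1, htT⟩ := ht
  have hzt1 : 0 < z t1 := hpos t1 ⟨le_rfl, hT⟩
  have hzt : 0 < z t := hpos t ⟨ht1, htT⟩
  have hcpos : 0 < G - a * z t1 := by
    rw [lt_div_iff₀ ha] at hinit; linarith
  set g : ℝ → ℝ := fun s => (a * z s - G) * Real.exp (-(a * P s)) with hgdef
  -- derivative of g on Ico t1 T
  have hgderiv : ∀ x ∈ Set.Ico t1 T, HasDerivAt g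
      (a * z' x * Real.exp (-(a * P x)) +
        (a * z x - G) * (Real.exp (-(a * P x)) * -(a * p x))) x := by
    intro x hx
    have h1 : HasDerivAt (fun s => a * z s - G) (a * z' x) x :=
      ((hz x hx).const_mul a).sub_const G
    have h2 : HasDerivAt (fun s => Real.exp (-(a * P s)))
        (Real.exp (-(a * P x)) * -(a * p x)) x := (((hP x).const_mul a).neg).exp
    exact h1.mul h2
  -- g is antitone on Icc t1 t
  have hanti : AntitoneOn g (Set.Icc t1 t) := by
    apply antitoneOn_of_deriv_nonpos (convex_Icc t1 t)
    · intro x hx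
      have hx' : x ∈ Set.Ico t1 T := ⟨hx.1, lt_of_le_of_lt hx.2 htT⟩
      exact ((hgderiv x hx').continuousAt).continuousWithinAt
    · intro x hx
      rw [interior_Icc] at hx
      have hx' : x ∈ Set.Ico t1 T := ⟨le_of_lt hx.1, lt_trans hx.2 htT⟩
      exact (hgderiv x hx').differentiableAt.differentiableWithinAt
    · intro x hx
      rw [interior_Icc] at hx
      have hx' : x ∈ Set.Ico t1 T := ⟨le_of_lt hx.1, lt_trans hx.2 htT⟩
      rw [(hgderiv x hx').deriv]
      have hE : 0 < Real.exp (-(a * P x)) := Real.exp_pos _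
      have hi := hineq x hx'
      nlinarith [mul_le_mul_of_nonneg_right hi (le_of_lt hE),
        mul_pos ha hE]
  have hkey : g t ≤ g t1 := hanti ⟨le_rfl, ht1⟩ ⟨ht1, le_rfl⟩ ht1
  have hE1 : 0 < Real.exp (-(a * P t1)) := Real.exp_pos _
  have hEt : 0 < Real.exp (-(a * P t)) := Real.exp_pos _
  -- strict: -G * exp(-aPt) < g t
  have hstrict : (G - a * z t1) * Real.exp (-(a * P t1)) < G * Real.exp (-(a * P t)) := by
    have h1 : -G * Real.exp (-(a * P t)) < g t := by
      have : -G < a * z t - G := by nlinarith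
      simpa [hgdef] using mul_lt_mul_of_pos_right this hEt
    have h2 : g t1 = -((G - a * z t1) * Real.exp (-(a * P t1))) := by
      simp [hgdef]; ring
    nlinarith [hkey]
  -- take logs
  have hlpos : 0 < (G - a * z t1) * Real.exp (-(a * P t1)) := mul_pos hcpos hE1
  have hlog := Real.log_lt_log hlpos hstrict
  rw [Real.log_mul (ne_of_gt hcpos) (ne_of_gt hE1),
      Real.log_mul (ne_of_gt hG) (ne_of_gt hEt), Real.log_exp, Real.log_exp] at hlog
  have harg : 1 - a * z t1 / G = (G - a * z t1) / G := by field_simp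
  rw [harg, Real.log_div (ne_of_gt hcpos) (ne_of_gt hG)]
  rw [← mul_lt_mul_iff_right₀ ha]
  have hra : a * (P t1 - 1 / a * (Real.log (G - a * z t1) - Real.log G))
      = a * P t1 - (Real.log (G - a * z t1) - Real.log G) := by
    field_simp
  rw [hra]
  linarith [hlog]
end

section
/- Let a, G, q > 0 and t1 be real numbers, and let T be a real number with t1 < T. Suppose y : ℝ → ℝ satisfies y(t) > 0 for all t ∈ [t1, T), and y has at every t ∈ [t1, T) a derivative y'(t) with y'(t) ≥ -2*a*y(t) + 2*G*(y(t))^(q+1), and suppose G * (y(t1))^q > a. Then T ≤ t1 - (1/(2*a*q)) * log(1 - a/(G * (y(t1))^q)). -/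
/-- Quantitative finite-time blow-up (Section 3): a positive solution of
`y' ≥ -2a·y + 2G·y^(q+1)` on `[t1, T)` with `G·y(t1)^q > a` cannot exist beyond
`t1 - (1/(2aq))·log(1 - a/(G·y(t1)^q))`. -/
theorem stmt11 (a G q t1 T : ℝ) (ha : 0 < a) (hG : 0 < G) (hq : 0 < q) (hT : t1 < T)
    (y y' : ℝ → ℝ)
    (hpos : ∀ t ∈ Set.Ico t1 T, 0 < y t)
    (hy : ∀ t ∈ Set.Ico t1 T, HasDerivAt y (y' t) t)
    (hineq : ∀ t ∈ Set.Ico t1 T, -2 * a * y t + 2 * G * y t ^ (q + 1) ≤ y' t)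
    (hinit : a < G * y t1 ^ q) :
    T ≤ t1 - (1 / (2 * a * q)) * Real.log (1 - a / (G * y t1 ^ q)) := by
  set k : ℝ := 2 * a * q with hk
  have hkpos : 0 < k := by positivity
  set z : ℝ → ℝ := fun t => y t ^ (-q) with hz
  set u : ℝ → ℝ := fun t => Real.exp (-(k * t)) * (z t - G / a) with hu
  -- derivative of u on Ico t1 T
  have hud : ∀ t ∈ Set.Ico t1 T, HasDerivAt u
      (Real.exp (-(k * t)) * (-k) * (z t - G / a)
        + Real.exp (-(k * t)) * (y' t * (-q) * y t ^ (-q - 1))) t := by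
    intro t ht
    have hyt := hpos t ht
    have hz' : HasDerivAt z (y' t * (-q) * y t ^ (-q - 1)) t :=
      (hy t ht).rpow_const (Or.inl hyt.ne')
    have h0 : HasDerivAt (fun s : ℝ => -(k * s)) (-k) t := by
      simpa using (hasDerivAt_id t).const_mul (-k)
    have he : HasDerivAt (fun s => Real.exp (-(k * s))) (Real.exp (-(k * t)) * (-k)) t :=
      h0.exp
    exact he.mul (hz'.sub_const (G / a))
  -- the derivative is nonpositive
  have hud_nonpos : ∀ t ∈ Set.Ico t1 T,
      Real.exp (-(k * t)) * (-k) * (z t - G / a)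
        + Real.exp (-(k * t)) * (y' t * (-q) * y t ^ (-q - 1)) ≤ 0 := by
    intro t ht
    have hyt := hpos t ht
    have h1 : y t * y t ^ (-q - 1) = z t := by
      rw [hz]
      rw [show y t * y t ^ (-q - 1) = y t ^ (1 : ℝ) * y t ^ (-q - 1) by rw [Real.rpow_one],
        ← Real.rpow_add hyt]
      norm_num
    have h2 : y t ^ (q + 1) * y t ^ (-q - 1) = 1 := by
      rw [← Real.rpow_add hyt]
      norm_num
    have hm : (0:ℝ) ≤ q * y t ^ (-q - 1) := by positivity
    have hineqt := hineq t ht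
    have hmul := mul_le_mul_of_nonneg_right hineqt hm
    have expand : (-2 * a * y t + 2 * G * y t ^ (q + 1)) * (q * y t ^ (-q - 1))
        = -(k * z t) + 2 * G * q := by
      rw [hk]
      linear_combination (-2 * a * q) * h1 + (2 * G * q) * h2
    have key : y' t * (-q) * y t ^ (-q - 1) ≤ k * z t - 2 * G * q := by
      rw [expand] at hmul
      nlinarith [hmul]
    have hexp : (0:ℝ) < Real.exp (-(k * t)) := Real.exp_pos _
    have hka : k * (G / a) = 2 * G * q := by
      rw [hk]; field_simp
    have hfin : Real.exp (-(k * t)) * (-k) * (z t - G / a)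
        + Real.exp (-(k * t)) * (k * z t - 2 * G * q) = 0 := by
      linear_combination Real.exp (-(k * t)) * hka
    nlinarith [mul_le_mul_of_nonneg_left key hexp.le]
  -- u is antitone on Ico t1 T
  have hanti : AntitoneOn u (Set.Ico t1 T) := by
    apply antitoneOn_of_hasDerivWithinAt_nonpos (convex_Ico t1 T)
    · intro t ht
      exact ((hud t ht).continuousAt).continuousWithinAt
    · intro t ht
      rw [interior_Ico] at ht
      exact ((hud t (Set.Ioo_subset_Ico_self ht)).hasDerivWithinAt)
    · intro t ht
      rw [interior_Ico] at ht
      exact hud_nonpos t (Set.Ioo_subset_Ico_self ht)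
  -- basic facts at t1
  have ht1 : t1 ∈ Set.Ico t1 T := ⟨le_refl _, hT⟩
  have hy1 : 0 < y t1 := hpos t1 ht1
  have hQ : 0 < G * y t1 ^ q := lt_trans ha hinit
  set c : ℝ := 1 - a / (G * y t1 ^ q) with hc
  have hc0 : 0 < c := by
    have : a / (G * y t1 ^ q) < 1 := (div_lt_one hQ).2 hinit
    simp only [hc]; linarith
  have hc1 : c < 1 := by
    have : 0 < a / (G * y t1 ^ q) := by positivity
    simp only [hc]; linarith
  -- z t1 relation
  have hz1 : a / G * z t1 = a / (G * y t1 ^ q) := by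
    have hzz : z t1 = (y t1 ^ q)⁻¹ := by
      simp only [hz]
      rw [Real.rpow_neg hy1.le]
    rw [hzz]
    field_simp
  -- key pointwise bound
  have hpt : ∀ t ∈ Set.Ico t1 T, t < t1 - 1 / k * Real.log c := by
    intro t ht
    have hle : u t ≤ u t1 := hanti ht1 ht ht.1
    have hzt : 0 < z t := Real.rpow_pos_of_pos (hpos t ht) _
    have he_t : (0:ℝ) < Real.exp (-(k * t)) := Real.exp_pos _
    have he_1 : (0:ℝ) < Real.exp (-(k * t1)) := Real.exp_pos _
    have hstep : c * Real.exp (-(k * t1)) < Real.exp (-(k * t)) := by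
      have h1 : Real.exp (-(k * t)) * (0 - G / a) < u t := by
        have h' : (0:ℝ) - G / a < z t - G / a := by linarith
        exact (mul_lt_mul_iff_right₀ he_t).2 h'
      have h2 : Real.exp (-(k * t)) * (0 - G / a) < Real.exp (-(k * t1)) * (z t1 - G / a) :=
        lt_of_lt_of_le h1 hle
      have hga : (0:ℝ) < a / G := by positivity
      have h3 := mul_lt_mul_of_pos_left (neg_lt_neg h2) hga
      have hczt : c = 1 - a / G * z t1 := by rw [hc, hz1]
      calc c * Real.exp (-(k * t1))
          = a / G * -(Real.exp (-(k * t1)) * (z t1 - G / a)) := by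
            rw [hczt]; field_simp; ring
        _ < a / G * -(Real.exp (-(k * t)) * (0 - G / a)) := h3
        _ = Real.exp (-(k * t)) := by field_simp; ring
    have hlog : Real.log c + -(k * t1) < -(k * t) := by
      have hl := Real.log_lt_log (by positivity) hstep
      rwa [Real.log_mul hc0.ne' he_1.ne', Real.log_exp, Real.log_exp] at hl
    have heq : k * (t1 - 1 / k * Real.log c) = k * t1 - Real.log c := by
      field_simp
    have hlt : k * t < k * (t1 - 1 / k * Real.log c) := by
      rw [heq]; linarith
    exact (mul_lt_mul_iff_right₀ hkpos).1 hlt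
  -- conclude
  by_contra hcon
  push_neg at hcon
  set B : ℝ := t1 - 1 / k * Real.log c with hB
  clear_value B
  have hlc : Real.log c < 0 := Real.log_neg hc0 hc1
  have hBt1 : t1 < B := by
    have h1k : 0 < 1 / k := by positivity
    rw [hB]
    nlinarith
  have htmem : (B + T) / 2 ∈ Set.Ico t1 T := ⟨by linarith, by linarith⟩
  have hlast := hpt _ htmem
  linarith
end

section
/- Let α ∈ ℝ, g > 0, T > 0 be reals and let p : ℝ → ℝ be continuous. Suppose y : ℝ → ℝ satisfies y(t) > 0 for all t ∈ [0, T], and y has at every t ∈ [0, T] a derivative y'(t) with y'(t) ≤ -2*α*y(t) + 2*g*(y(t))^(1 + p(t)/2). Then for every t ∈ [0, T], y(t) ≤ y(0) * exp(-2*α*t + 2*g*∫_0^t (y(s))^(p(s)/2) ds). -/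
/-- Nonlinear Grönwall estimate (3.4): if `y > 0` on `[0, T]` satisfies
`y' ≤ -2α·y + 2g·y^(1 + p(t)/2)`, then
`y(t) ≤ y(0)·exp(-2αt + 2g·∫_0^t y(s)^(p(s)/2) ds)` on `[0, T]`. -/
theorem stmt14 (α g T : ℝ) (hg : 0 < g) (hT : 0 < T) (p : ℝ → ℝ) (hp : Continuous p)
    (y y' : ℝ → ℝ)
    (hpos : ∀ t ∈ Set.Icc (0 : ℝ) T, 0 < y t)
    (hy : ∀ t ∈ Set.Icc (0 : ℝ) T, HasDerivAt y (y' t) t)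
    (hineq : ∀ t ∈ Set.Icc (0 : ℝ) T, y' t ≤ -2 * α * y t + 2 * g * y t ^ (1 + p t / 2)) :
    ∀ t ∈ Set.Icc (0 : ℝ) T,
      y t ≤ y 0 * Real.exp (-2 * α * t + 2 * g * ∫ s in (0 : ℝ)..t, y s ^ (p s / 2)) := by
  set f : ℝ → ℝ := fun s => y s ^ (p s / 2) with hf
  have hycont : ∀ s ∈ Set.Icc (0 : ℝ) T, ContinuousAt y s := fun s hs =>
    (hy s hs).continuousAt
  have hfc : ∀ s ∈ Set.Icc (0 : ℝ) T, ContinuousAt f s := by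
    intro s hs
    exact (hycont s hs).rpow ((hp.continuousAt).div_const 2) (Or.inl (ne_of_gt (hpos s hs)))
  have hfcOn : ContinuousOn f (Set.Icc 0 T) := fun s hs => (hfc s hs).continuousWithinAt
  set I : ℝ → ℝ := fun t => ∫ s in (0 : ℝ)..t, f s with hI
  have huIcc : Set.uIcc (0 : ℝ) T = Set.Icc 0 T := Set.uIcc_of_le hT.le
  have hIcont : ContinuousOn I (Set.Icc 0 T) := by
    have := intervalIntegral.continuousOn_primitive_interval
      (f := f) (a := (0 : ℝ)) (b := T) (μ := MeasureTheory.volume) ?_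
    · simpa [huIcc] using this
    · rw [huIcc]
      exact hfcOn.integrableOn_compact isCompact_Icc
  set F : ℝ → ℝ := fun t => -2 * α * t + 2 * g * I t - Real.log (y t) with hF
  have hFderiv : ∀ t ∈ Set.Ioo (0 : ℝ) T,
      HasDerivAt F (-2 * α + 2 * g * f t - y' t / y t) t := by
    intro t ht
    have htIcc : t ∈ Set.Icc (0 : ℝ) T := Set.mem_Icc_of_Ioo ht
    have h1 : HasDerivAt (fun t : ℝ => -2 * α * t) (-2 * α) t := by
      simpa using (hasDerivAt_id t).const_mul (-2 * α)
    have h2 : HasDerivAt I (f t) t := by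
      apply intervalIntegral.integral_hasDerivAt_right
      · apply ContinuousOn.intervalIntegrable
        rw [Set.uIcc_of_le ht.1.le]
        exact hfcOn.mono (Set.Icc_subset_Icc le_rfl ht.2.le)
      · exact ContinuousAt.stronglyMeasurableAtFilter isOpen_Ioo
          (fun s hs => hfc s (Set.mem_Icc_of_Ioo hs)) t ht
      · exact hfc t htIcc
    have h3 : HasDerivAt (fun t => Real.log (y t)) (y' t / y t) t :=
      (hy t htIcc).log (ne_of_gt (hpos t htIcc))
    exact (h1.add (h2.const_mul (2 * g))).sub h3
  have hFcont : ContinuousOn F (Set.Icc 0 T) := by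
    apply ContinuousOn.sub
    · exact ((continuous_const.mul continuous_id).continuousOn).add
        (continuousOn_const.mul hIcont)
    · exact ContinuousOn.log (fun s hs => (hycont s hs).continuousWithinAt)
        (fun s hs => ne_of_gt (hpos s hs))
  have hF'nonneg : ∀ t ∈ Set.Ioo (0 : ℝ) T, 0 ≤ -2 * α + 2 * g * f t - y' t / y t := by
    intro t ht
    have htIcc : t ∈ Set.Icc (0 : ℝ) T := Set.mem_Icc_of_Ioo ht
    have hyt := hpos t htIcc
    have key : y' t ≤ y t * (-2 * α + 2 * g * f t) := by
      have hr : y t ^ (1 + p t / 2) = y t * f t := by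
        rw [hf]
        rw [Real.rpow_add hyt, Real.rpow_one]
      calc y' t ≤ -2 * α * y t + 2 * g * y t ^ (1 + p t / 2) := hineq t htIcc
        _ = y t * (-2 * α + 2 * g * f t) := by rw [hr]; ring
    have : y' t / y t ≤ -2 * α + 2 * g * f t := (div_le_iff₀ hyt).2 (by linarith [key])
    linarith
  have hmono : MonotoneOn F (Set.Icc 0 T) := by
    apply monotoneOn_of_deriv_nonneg (convex_Icc 0 T) hFcont
    · intro t ht
      rw [interior_Icc] at ht
      exact (hFderiv t ht).differentiableAt.differentiableWithinAt
    · intro t ht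
      rw [interior_Icc] at ht
      rw [(hFderiv t ht).deriv]
      exact hF'nonneg t ht
  intro t ht
  have h0 : (0 : ℝ) ∈ Set.Icc (0 : ℝ) T := by exact ⟨le_rfl, hT.le⟩
  have hF0 : F 0 ≤ F t := hmono h0 ht ht.1
  have hI0 : I 0 = 0 := intervalIntegral.integral_same
  have hlog : Real.log (y t) ≤ Real.log (y 0) + (-2 * α * t + 2 * g * I t) := by
    have : -2 * α * 0 + 2 * g * I 0 - Real.log (y 0) ≤
        -2 * α * t + 2 * g * I t - Real.log (y t) := hF0
    rw [hI0] at this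
    linarith
  have hyt := hpos t ht
  have hy0 := hpos 0 h0
  calc y t = Real.exp (Real.log (y t)) := (Real.exp_log hyt).symm
    _ ≤ Real.exp (Real.log (y 0) + (-2 * α * t + 2 * g * I t)) := Real.exp_le_exp.2 hlog
    _ = y 0 * Real.exp (-2 * α * t + 2 * g * I t) := by
        rw [Real.exp_add, Real.exp_log hy0]
end

section
/- Let A, g, q > 0 be real numbers. Suppose y : ℝ → ℝ satisfies y(t) ≥ 0 for all t ≥ 0, y has at every t ≥ 0 a derivative y'(t) with y'(t) ≤ -2*A*y(t) + 2*g*(y(t))^(q+1), and g * (y(0))^q < A. Then for every t ≥ 0, y(t) ≤ y(0) * exp(-2*(A - g*(y(0))^q) * t). -/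
open Set Filter Real

private lemma rpow_aux (q : ℝ) (hq : 0 < q) {u C : ℝ} (hu : 0 ≤ u) (huC : u ≤ C) :
    u ^ (q + 1) ≤ u * C ^ q := by
  rcases eq_or_lt_of_le hu with h | h
  · rw [← h, Real.zero_rpow (by positivity), zero_mul]
  · rw [add_comm, Real.rpow_add h, Real.rpow_one]
    exact mul_le_mul_of_nonneg_left (Real.rpow_le_rpow hu huC hq.le) hu

/-- Smallness–decay claim of Subsection 2.3: if `y ≥ 0` satisfies
`y' ≤ -2A·y + 2g·y^(q+1)` for `t ≥ 0` and `g·y(0)^q < A`, then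
`y(t) ≤ y(0)·exp(-2(A - g·y(0)^q)·t)` for all `t ≥ 0`. -/
theorem stmt15 (A g q : ℝ) (hA : 0 < A) (hg : 0 < g) (hq : 0 < q)
    (y y' : ℝ → ℝ)
    (hpos : ∀ t : ℝ, 0 ≤ t → 0 ≤ y t)
    (hy : ∀ t : ℝ, 0 ≤ t → HasDerivAt y (y' t) t)
    (hineq : ∀ t : ℝ, 0 ≤ t → y' t ≤ -2 * A * y t + 2 * g * y t ^ (q + 1))
    (hinit : g * y 0 ^ q < A) :
    ∀ t : ℝ, 0 ≤ t → y t ≤ y 0 * Real.exp (-2 * (A - g * y 0 ^ q) * t) := by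
  set B := y 0 with hBdef
  have hB0 : 0 ≤ B := hpos 0 le_rfl
  -- choose C > B with g * C ^ q < A
  obtain ⟨C, hBC, hCA⟩ : ∃ C : ℝ, B < C ∧ g * C ^ q < A := by
    have hcont : ContinuousAt (fun c : ℝ => g * c ^ q) B :=
      continuousAt_const.mul (Real.continuousAt_rpow_const B q (Or.inr hq.le))
    have hnhds : {c : ℝ | g * c ^ q < A} ∈ nhds B :=
      hcont.preimage_mem_nhds (isOpen_Iio.mem_nhds hinit)
    obtain ⟨ε, hε, hball⟩ := Metric.mem_nhds_iff.mp hnhds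
    refine ⟨B + ε / 2, by linarith, hball ?_⟩
    simp only [Metric.mem_ball, Real.dist_eq, add_sub_cancel_left,
      abs_of_nonneg (le_of_lt (half_pos hε))]
    linarith
  -- continuity of y on [0, b]
  have hycont : ∀ b : ℝ, ContinuousOn y (Icc 0 b) := fun b u hu =>
    ((hy u hu.1).continuousAt).continuousWithinAt
  -- If y ≤ D on Ico 0 s (D with g D^q < A), then y antitone on Icc 0 s
  have hanti : ∀ D s : ℝ, g * D ^ q < A → (∀ u, u ∈ Set.Ico (0:ℝ) s → y u ≤ D) →
      AntitoneOn y (Set.Icc 0 s) := by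
    intro D s hDA hbound
    apply antitoneOn_of_deriv_nonpos (convex_Icc 0 s) (hycont s)
    · intro u hu
      rw [interior_Icc] at hu
      exact ((hy u hu.1.le).differentiableAt).differentiableWithinAt
    · intro u hu
      rw [interior_Icc] at hu
      have hu0 : (0:ℝ) ≤ u := hu.1.le
      rw [(hy u hu0).deriv]
      have h1 := hineq u hu0
      have h2 : y u ^ (q + 1) ≤ y u * D ^ q :=
        rpow_aux q hq (hpos u hu0) (hbound u ⟨hu0, hu.2⟩)
      nlinarith [hpos u hu0]
  -- Step 1: invariance `y t ≤ B` for `t ≥ 0`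
  have hinv : ∀ t : ℝ, 0 ≤ t → y t ≤ B := by
    intro t2 ht2
    by_contra hgt
    push_neg at hgt
    set C' := min C ((B + y t2) / 2) with hC'def
    have hBC' : B < C' := lt_min hBC (by linarith)
    have hC'A : g * C' ^ q < A :=
      lt_of_le_of_lt
        (mul_le_mul_of_nonneg_left
          (Real.rpow_le_rpow (hB0.trans hBC'.le) (min_le_left _ _) hq.le) hg.le) hCA
    have hC'y : C' ≤ y t2 := (min_le_right _ _).trans (by linarith)
    -- first time y reaches C'
    set S := Set.Icc (0:ℝ) t2 ∩ y ⁻¹' Set.Ici C' with hSdef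
    have hSne : S.Nonempty := ⟨t2, ⟨ht2, le_rfl⟩, hC'y⟩
    have hSbdd : BddBelow S := ⟨0, fun u hu => hu.1.1⟩
    have hSclosed : IsClosed S :=
      (hycont t2).preimage_isClosed_of_isClosed isClosed_Icc isClosed_Ici
    set s := sInf S with hsdef
    have hsS : s ∈ S := hSclosed.csInf_mem hSne hSbdd
    have hs0 : 0 ≤ s := hsS.1.1
    have hys : C' ≤ y s := hsS.2
    have hA' : AntitoneOn y (Set.Icc 0 s) := by
      apply hanti C' s hC'A
      intro u hu
      by_contra hCu
      push_neg at hCu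
      have : s ≤ u := csInf_le hSbdd ⟨⟨hu.1, hu.2.le.trans hsS.1.2⟩, hCu.le⟩
      exact absurd this (not_le.mpr hu.2)
    have := hA' (Set.left_mem_Icc.mpr hs0) (Set.right_mem_Icc.mpr hs0) hs0
    -- y s ≤ y 0 = B < C' ≤ y s
    linarith
  -- Step 2: Gronwall with rate K = -2 (A - g B^q)
  intro t ht
  set K := -2 * (A - g * B ^ q) with hKdef
  have key : ∀ x ∈ Set.Icc (0:ℝ) t, y x ≤ gronwallBound B K 0 (x - 0) := by
    apply le_gronwallBound_of_liminf_deriv_right_le (hycont t)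
    · intro x hx r hr
      exact (hy x hx.1).hasDerivWithinAt.liminf_right_slope_le hr
    · exact le_rfl
    · intro x hx
      have hx0 : (0:ℝ) ≤ x := hx.1
      have h1 := hineq x hx0
      have h2 : y x ^ (q + 1) ≤ y x * B ^ q :=
        rpow_aux q hq (hpos x hx0) (hinv x hx0)
      have h3 : y' x ≤ K * y x + 0 := by
        rw [hKdef]; nlinarith [hpos x hx0]
      exact h3
  have := key t ⟨ht, le_rfl⟩
  rwa [sub_zero, gronwallBound_ε0] at this
end
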